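/- Let (W, S) be a Coxeter group of type A_n and let E = (E, ≤, ε) be the heap of a fully commutative element of W. Then for every minimal balanced subinterval [a, b] of E, the set S_{[a,b]} consists of precisely two elements, and these two elements have distinct labels. -/

import Mathlib

/-- `ρ` is a rank function for the poset `E`:
it increases by exactly 1 along covering relations. -/
def IsRankFunction {E : Type*} [PartialOrder E] (ρ : E → ℤ) : Prop :=
  ∀ a b : E, a ⋖ b → ρ b = ρ a + 1

/-- A poset is ranked if it admits a rank function. -/
def Ranked (E : Type*) [PartialOrder E] : Prop :=
  ∃ ρ : E → ℤ, IsRankFunction ρ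

/-- Two elements lie in the same connected component of the poset: the
equivalence relation generated by the covering relation. -/
def SameComponent {E : Type*} [PartialOrder E] (a b : E) : Prop :=
  Relation.EqvGen (fun x y : E => x ⋖ y) a b

/-- The heap axioms for a labelling `ε : E → P` of a poset `E` with
concurrency relation `C` on the pieces `P`. -/
def IsHeap {E P : Type*} [PartialOrder E] (C : P → P → Prop) (ε : E → P) : Prop :=
  (∀ α β : E, C (ε α) (ε β) → α ≤ β ∨ β ≤ α) ∧
  (∀ α β : E, α ≤ β ↔ Relation.TransGen (fun x y : E => x ≤ y ∧ C (ε x) (ε y)) α β)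

/-- `[a, b]` is a minimal balanced subinterval: `a ≠ b`, `ε a = ε b`, and the
only elements of `[a, b]` with label `ε a` are `a` and `b`. -/
def MinBalanced {E P : Type*} [PartialOrder E] (ε : E → P) (a b : E) : Prop :=
  a < b ∧ ε a = ε b ∧ ∀ c ∈ Set.Icc a b, ε c = ε a → c = a ∨ c = b

/-- The set `S_{[a,b]}` of elements of `[a, b]` whose label is distinct from,
but concurrent with, the label of `a`. -/
def intervalS {E P : Type*} [PartialOrder E] (C : P → P → Prop) (ε : E → P)
    (a b : E) : Set E :=
  {c | c ∈ Set.Icc a b ∧ ε c ≠ ε a ∧ C (ε a) (ε c)}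

/-- The concurrency subgraph of the heap (the simple graph on the labels
occurring in `E`, with distinct labels adjacent iff concurrent) is acyclic. -/
def NoCircuits {E P : Type*} [PartialOrder E] (C : P → P → Prop) (ε : E → P) : Prop :=
  (SimpleGraph.fromRel (fun v w : Set.range ε => C v.1 w.1)).IsAcyclic

/-- A single commutation move: swap an adjacent pair of commuting generators. -/
def CommMove {B : Type*} (M : CoxeterMatrix B) (ω ω' : List B) : Prop :=
  ∃ (l₁ l₂ : List B) (s t : B), M s t = 2 ∧
    ω = l₁ ++ s :: t :: l₂ ∧ ω' = l₁ ++ t :: s :: l₂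

/-- `w` is fully commutative: any two reduced words for `w` are related by a
sequence of commutation moves. -/
def IsFullyCommutative {B W : Type*} [Group W] {M : CoxeterMatrix B}
    (cs : CoxeterSystem M W) (w : W) : Prop :=
  ∀ ω ω' : List B, cs.IsReduced ω → cs.IsReduced ω' →
    cs.wordProd ω = w → cs.wordProd ω' = w →
      Relation.EqvGen (CommMove M) ω ω'

/-- The Coxeter system is FC-finite: only finitely many fully commutative elements. -/
def FCFinite {B W : Type*} [Group W] {M : CoxeterMatrix B}
    (cs : CoxeterSystem M W) : Prop :=
  {w : W | IsFullyCommutative cs w}.Finite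

/-- A heap with pieces in `B` (concurrency: `m s t ≠ 2`) is the heap of a fully
commutative element for the Coxeter matrix `m` (`m s t = 0` encodes `m(s,t) = ∞`):
there is no convex chain with labels alternating `s, t, s, …` of length `m s t ≥ 3`,
and no covering relation whose endpoints carry the same label. -/
def IsFCHeap {E B : Type*} [PartialOrder E] (m : B → B → ℕ) (ε : E → B) : Prop :=
  IsHeap (fun s t => m s t ≠ 2) ε ∧
  (∀ (s t : B) (k : ℕ), 3 ≤ k → m s t = k →
    ¬ ∃ α : Fin k → E, StrictMono α ∧
        (∀ γ : E, ∀ i j : Fin k, α i < γ → γ < α j → ∃ l : Fin k, γ = α l) ∧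
        (∀ i : Fin k, ε (α i) = if (i : ℕ) % 2 = 0 then s else t)) ∧
  (∀ α β : E, α ⋖ β → ε α ≠ ε β)


section AnFacts

variable {n : ℕ}

lemma An_apply (s t : Fin n) :
    CoxeterMatrix.Aₙ n s t
      = if s = t then 1 else (if (t : ℕ) + 1 = s ∨ (s : ℕ) + 1 = t then 3 else 2) := rfl

lemma An_ne_two_iff (s t : Fin n) :
    CoxeterMatrix.Aₙ n s t ≠ 2 ↔ s = t ∨ (t : ℕ) + 1 = s ∨ (s : ℕ) + 1 = t := by
  rw [An_apply]
  split_ifs with h1 h2 <;> simp_all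

lemma An_ne_two_symm {s t : Fin n} (h : CoxeterMatrix.Aₙ n s t ≠ 2) :
    CoxeterMatrix.Aₙ n t s ≠ 2 := by
  rw [An_ne_two_iff] at h ⊢
  exact h.imp Eq.symm Or.symm

lemma An_eq_three {s t : Fin n} (h : s ≠ t) (h2 : CoxeterMatrix.Aₙ n s t ≠ 2) :
    CoxeterMatrix.Aₙ n s t = 3 := by
  rw [An_apply, if_neg h] at h2 ⊢
  split_ifs at h2 ⊢ with h3
  · rfl
  · exact absurd rfl h2

lemma An_diag_ne_two (s : Fin n) : CoxeterMatrix.Aₙ n s s ≠ 2 := by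
  rw [An_ne_two_iff]; exact Or.inl rfl

end AnFacts

section HeapLemmas

variable {E : Type*} [PartialOrder E] {n : ℕ} {ε : E → Fin n}

lemma exists_consecutive_aux [Finite E] :
    ∀ N : ℕ, ∀ u v : E, (Set.Icc u v).ncard ≤ N → u < v → ε u = ε v →
      ∃ u' v', u ≤ u' ∧ v' ≤ v ∧ ε u' = ε u ∧ MinBalanced ε u' v' := by
  intro N
  induction N with
  | zero =>
    intro u v hcard huv _
    exfalso
    have h1 : (Set.Icc u v).Nonempty := ⟨u, le_refl u, huv.le⟩
    have h2 := (Set.ncard_pos (Set.toFinite _)).mpr h1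
    omega
  | succ N ih =>
    intro u v hcard huv hlab
    by_cases hmin : ∀ c ∈ Set.Icc u v, ε c = ε u → c = u ∨ c = v
    · exact ⟨u, v, le_refl u, le_refl v, rfl, huv, hlab, hmin⟩
    · push_neg at hmin
      obtain ⟨c, hc, hcl, hcu, hcv⟩ := hmin
      have hucv : u < c := lt_of_le_of_ne hc.1 (Ne.symm hcu)
      have hcv' : c < v := lt_of_le_of_ne hc.2 hcv
      have hsub : Set.Icc u c ⊂ Set.Icc u v := by
        constructor
        · exact Set.Icc_subset_Icc le_rfl hc.2
        · intro hsup
          have hv : v ∈ Set.Icc u c := hsup ⟨huv.le, le_refl v⟩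
          exact absurd hv.2 (not_le_of_gt hcv')
      have hlt := Set.ncard_lt_ncard hsub (Set.toFinite _)
      obtain ⟨u', v', h1, h2, h3, h4⟩ := ih u c (by omega) hucv hcl.symm
      exact ⟨u', v', h1, h2.trans hc.2, h3, h4⟩

lemma exists_consecutive [Finite E] (u v : E) (huv : u < v) (hlab : ε u = ε v) :
    ∃ u' v', u ≤ u' ∧ v' ≤ v ∧ ε u' = ε u ∧ MinBalanced ε u' v' :=
  exists_consecutive_aux (Set.Icc u v).ncard u v le_rfl huv hlab

lemma mem_intervalS {a b e : E} :
    e ∈ intervalS (fun s t => CoxeterMatrix.Aₙ n s t ≠ 2) ε a b ↔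
      e ∈ Set.Icc a b ∧ ε e ≠ ε a ∧ CoxeterMatrix.Aₙ n (ε a) (ε e) ≠ 2 := Iff.rfl

lemma S_strict {a b e : E} (hmb : MinBalanced ε a b)
    (he : e ∈ intervalS (fun s t => CoxeterMatrix.Aₙ n s t ≠ 2) ε a b) :
    e ∈ Set.Ioo a b := by
  constructor
  · refine lt_of_le_of_ne he.1.1 fun h => ?_
    exact he.2.1 (by rw [← h])
  · refine lt_of_le_of_ne he.1.2 fun h => ?_
    exact he.2.1 (by rw [h, ← hmb.2.1])

lemma step_below (hheap : IsFCHeap (fun s t => CoxeterMatrix.Aₙ n s t) ε)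
    {a b : E} (hmb : MinBalanced ε a b) {δ : E} (h1 : a ≤ δ)
    (hC : CoxeterMatrix.Aₙ n (ε a) (ε δ) ≠ 2) (h2 : δ < b) :
    δ = a ∨ δ ∈ intervalS (fun s t => CoxeterMatrix.Aₙ n s t ≠ 2) ε a b := by
  by_cases hlab : ε δ = ε a
  · rcases hmb.2.2 δ ⟨h1, h2.le⟩ hlab with h | h
    · exact Or.inl h
    · exact absurd h (ne_of_lt h2)
  · exact Or.inr ⟨⟨h1, h2.le⟩, hlab, hC⟩

lemma below (hheap : IsFCHeap (fun s t => CoxeterMatrix.Aₙ n s t) ε)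
    {a b : E} (hmb : MinBalanced ε a b) {γ : E} (h1 : a < γ) (h2 : γ < b) :
    ∃ x ∈ intervalS (fun s t => CoxeterMatrix.Aₙ n s t ≠ 2) ε a b, x ≤ γ := by
  have key : ∀ δ : E,
      Relation.TransGen
        (fun x y : E => x ≤ y ∧ CoxeterMatrix.Aₙ n (ε x) (ε y) ≠ 2) a δ → δ < b →
      δ = a ∨ ∃ x ∈ intervalS (fun s t => CoxeterMatrix.Aₙ n s t ≠ 2) ε a b, x ≤ δ := by
    intro δ hδ
    induction hδ with
    | single h =>
      intro hδb
      rcases step_below hheap hmb h.1 h.2 hδb with h' | h'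
      · exact Or.inl h'
      · exact Or.inr ⟨_, h', le_refl _⟩
    | tail hab hbc ih =>
      intro hδb
      have hmid := lt_of_le_of_lt hbc.1 hδb
      rcases ih hmid with h' | ⟨x, hx, hxm⟩
      · subst h'
        rcases step_below hheap hmb hbc.1 hbc.2 hδb with h'' | h''
        · exact Or.inl h''
        · exact Or.inr ⟨_, h'', le_refl _⟩
      · exact Or.inr ⟨x, hx, hxm.trans hbc.1⟩
  have htg := (hheap.1.2 a γ).1 h1.le
  rcases key γ htg h2 with h | h
  · exact absurd h (ne_of_gt h1)
  · exact h

lemma step_above (hheap : IsFCHeap (fun s t => CoxeterMatrix.Aₙ n s t) ε)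
    {a b : E} (hmb : MinBalanced ε a b) {δ : E} (h1 : δ ≤ b)
    (hC : CoxeterMatrix.Aₙ n (ε δ) (ε b) ≠ 2) (h2 : a < δ) :
    δ = b ∨ δ ∈ intervalS (fun s t => CoxeterMatrix.Aₙ n s t ≠ 2) ε a b := by
  by_cases hlab : ε δ = ε a
  · rcases hmb.2.2 δ ⟨h2.le, h1⟩ hlab with h | h
    · exact absurd h (ne_of_gt h2)
    · exact Or.inl h
  · refine Or.inr ⟨⟨h2.le, h1⟩, hlab, ?_⟩
    rw [← hmb.2.1] at hC
    exact An_ne_two_symm hC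

lemma above (hheap : IsFCHeap (fun s t => CoxeterMatrix.Aₙ n s t) ε)
    {a b : E} (hmb : MinBalanced ε a b) {γ : E} (h1 : a < γ) (h2 : γ < b) :
    ∃ x ∈ intervalS (fun s t => CoxeterMatrix.Aₙ n s t ≠ 2) ε a b, γ ≤ x := by
  have key : ∀ δ : E,
      Relation.TransGen
        (fun x y : E => x ≤ y ∧ CoxeterMatrix.Aₙ n (ε x) (ε y) ≠ 2) δ b → a < δ →
      δ = b ∨ ∃ x ∈ intervalS (fun s t => CoxeterMatrix.Aₙ n s t ≠ 2) ε a b, δ ≤ x := by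
    intro δ hδ
    induction hδ using Relation.TransGen.head_induction_on with
    | single h =>
      intro hδa
      rcases step_above hheap hmb h.1 h.2 hδa with h' | h'
      · exact Or.inl h'
      · exact Or.inr ⟨_, h', le_refl _⟩
    | head h' hTG ihc =>
      intro hδa
      rename_i δ' c
      have hmid : a < c := lt_of_lt_of_le hδa h'.1
      rcases ihc hmid with h'' | ⟨x, hx, hcx⟩
      · subst h''
        rcases step_above hheap hmb h'.1 h'.2 hδa with h'' | h''
        · exact Or.inl h''
        · exact Or.inr ⟨_, h'', le_refl _⟩
      · exact Or.inr ⟨x, hx, h'.1.trans hcx⟩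
  have htg := (hheap.1.2 γ b).1 h2.le
  rcases key γ htg h1 with h | h
  · exact absurd h (ne_of_lt h2)
  · exact h

lemma exists_two [Finite E] (hheap : IsFCHeap (fun s t => CoxeterMatrix.Aₙ n s t) ε)
    {a b : E} (hmb : MinBalanced ε a b) :
    ∃ x y, x ∈ intervalS (fun s t => CoxeterMatrix.Aₙ n s t ≠ 2) ε a b ∧
      y ∈ intervalS (fun s t => CoxeterMatrix.Aₙ n s t ≠ 2) ε a b ∧ x ≠ y := by
  have hIoo : (Set.Ioo a b).Nonempty := by
    by_contra h
    rw [Set.not_nonempty_iff_eq_empty] at h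
    have hcov : a ⋖ b :=
      ⟨hmb.1, fun c h1 h2 => (Set.eq_empty_iff_forall_notMem.mp h c) ⟨h1, h2⟩⟩
    exact hheap.2.2 a b hcov hmb.2.1
  obtain ⟨γ, hγ⟩ := hIoo
  obtain ⟨c, hc, -⟩ := below hheap hmb hγ.1 hγ.2
  by_contra hcon
  push_neg at hcon
  have hc' := S_strict hmb hc
  have hIoo_eq : ∀ γ' ∈ Set.Ioo a b, γ' = c := by
    intro γ' h'
    obtain ⟨x, hx, hxγ⟩ := below hheap hmb h'.1 h'.2
    obtain ⟨y, hy, hγy⟩ := above hheap hmb h'.1 h'.2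
    have hxc := hcon x c hx hc
    have hyc := hcon y c hy hc
    exact le_antisymm (hyc ▸ hγy) (hxc ▸ hxγ)
  have h3 : CoxeterMatrix.Aₙ n (ε a) (ε c) = 3 := An_eq_three (Ne.symm hc.2.1) hc.2.2
  refine hheap.2.1 (ε a) (ε c) 3 le_rfl h3 ⟨![a, c, b], ?_, ?_, ?_⟩
  · intro i j hij
    fin_cases i <;> fin_cases j <;>
      first
        | exact absurd hij (by decide)
        | simpa using hc'.1
        | simpa using hc'.2
        | simpa using hmb.1
  · intro γ' i j hi hj
    have hai : a ≤ ![a, c, b] i := by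
      fin_cases i <;> simp [hc'.1.le, hmb.1.le]
    have hjb : ![a, c, b] j ≤ b := by
      fin_cases j <;> simp [hc'.2.le, hmb.1.le]
    refine ⟨1, ?_⟩
    have := hIoo_eq γ' ⟨lt_of_le_of_lt hai hi, lt_of_lt_of_le hj hjb⟩
    simpa using this
  · intro i
    fin_cases i <;> simp [hmb.2.1.symm]

lemma descent_step [Finite E] (hheap : IsFCHeap (fun s t => CoxeterMatrix.Aₙ n s t) ε)
    {s : Fin n} {a b : E} (hmb : MinBalanced ε a b)
    (hadj : CoxeterMatrix.Aₙ n s (ε a) ≠ 2) (hne : s ≠ ε a)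
    (hforb : ∀ c ∈ Set.Ioo a b, ε c ≠ s) :
    ∃ a' b' : E, MinBalanced ε a' b' ∧
      CoxeterMatrix.Aₙ n (ε a) (ε a') ≠ 2 ∧ ε a ≠ ε a' ∧
      (∀ c ∈ Set.Ioo a' b', ε c ≠ ε a) ∧
      (((s : ℕ) + 1 = (ε a : ℕ) ∧ (ε a' : ℕ) = (ε a : ℕ) + 1) ∨
        ((ε a : ℕ) + 1 = (s : ℕ) ∧ (ε a' : ℕ) + 1 = (ε a : ℕ))) := by
  obtain ⟨c1, c2, hc1, hc2, hne12⟩ := exists_two hheap hmb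
  have hSlab : ∀ c, c ∈ intervalS (fun s t => CoxeterMatrix.Aₙ n s t ≠ 2) ε a b →
      ((ε c : ℕ) + 1 = (ε a : ℕ) ∨ (ε a : ℕ) + 1 = (ε c : ℕ)) ∧ ε c ≠ s := by
    intro c hcS
    have hstrict := S_strict hmb hcS
    refine ⟨?_, hforb c hstrict⟩
    rcases (An_ne_two_iff (ε a) (ε c)).mp hcS.2.2 with h | h | h
    · exact absurd h.symm hcS.2.1
    · exact Or.inl h
    · exact Or.inr h
  have hs := (An_ne_two_iff s (ε a)).mp hadj
  have hkey : ∃ w : ℕ,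
      (∀ c, c ∈ intervalS (fun s t => CoxeterMatrix.Aₙ n s t ≠ 2) ε a b → (ε c : ℕ) = w) ∧
      (((s : ℕ) + 1 = (ε a : ℕ) ∧ w = (ε a : ℕ) + 1) ∨
        ((ε a : ℕ) + 1 = (s : ℕ) ∧ w + 1 = (ε a : ℕ))) := by
    rcases hs with h | h | h
    · exact absurd h hne
    · -- (ε a) + 1 = s : labels of S elements must be (ε a) - 1
      refine ⟨(ε a : ℕ) - 1, fun c hcS => ?_, Or.inr ⟨h, ?_⟩⟩
      · obtain ⟨hv, hnes⟩ := hSlab c hcS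
        rcases hv with hv | hv
        · omega
        · exact absurd (Fin.ext (by omega : (ε c : ℕ) = (s : ℕ))) hnes
      · -- need (ε a) ≥ 1 : some c exists with ε c + 1 = ε a
        obtain ⟨hv, hnes⟩ := hSlab c1 hc1
        rcases hv with hv | hv
        · omega
        · exact absurd (Fin.ext (by omega : (ε c1 : ℕ) = (s : ℕ))) hnes
    · -- s + 1 = ε a : labels of S elements must be (ε a) + 1
      refine ⟨(ε a : ℕ) + 1, fun c hcS => ?_, Or.inl ⟨h, rfl⟩⟩
      obtain ⟨hv, hnes⟩ := hSlab c hcS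
      rcases hv with hv | hv
      · exact absurd (Fin.ext (by omega : (ε c : ℕ) = (s : ℕ))) hnes
      · omega
  obtain ⟨w, hw, hkd⟩ := hkey
  obtain ⟨u, v, huv, huS, hvS⟩ :
      ∃ u v, u < v ∧ u ∈ intervalS (fun s t => CoxeterMatrix.Aₙ n s t ≠ 2) ε a b ∧
        v ∈ intervalS (fun s t => CoxeterMatrix.Aₙ n s t ≠ 2) ε a b := by
    have hlab12 : ε c1 = ε c2 := Fin.ext (by rw [hw c1 hc1, hw c2 hc2])
    have hCc : CoxeterMatrix.Aₙ n (ε c1) (ε c2) ≠ 2 := by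
      rw [An_ne_two_iff]; exact Or.inl hlab12
    rcases hheap.1.1 c1 c2 hCc with hle | hle
    · exact ⟨c1, c2, lt_of_le_of_ne hle hne12, hc1, hc2⟩
    · exact ⟨c2, c1, lt_of_le_of_ne hle (Ne.symm hne12), hc2, hc1⟩
  have hlabuv : ε u = ε v := Fin.ext (by rw [hw u huS, hw v hvS])
  obtain ⟨a', b', hua', hb'v, hεa', hmb'⟩ := exists_consecutive u v huv hlabuv
  have hwa' : (ε a' : ℕ) = w := by rw [hεa', hw u huS]
  have hu' := S_strict hmb huS
  have hv' := S_strict hmb hvS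
  refine ⟨a', b', hmb', ?_, ?_, ?_, ?_⟩
  · rw [An_ne_two_iff]
    right
    rcases hkd with ⟨h1, h2⟩ | ⟨h1, h2⟩
    · right; omega
    · left; omega
  · intro h
    have : (ε a : ℕ) = (ε a' : ℕ) := congrArg Fin.val h
    rcases hkd with ⟨h1, h2⟩ | ⟨h1, h2⟩ <;> omega
  · intro c hc hlab
    have hc' : c ∈ Set.Icc a b :=
      ⟨(hu'.1.trans_le hua').le.trans hc.1.le, (hc.2.le.trans hb'v).trans hv'.2.le⟩
    rcases hmb.2.2 c hc' hlab with h | h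
    · subst h; exact absurd ((hu'.1.trans_le hua').trans hc.1) (lt_irrefl c)
    · subst h; exact absurd (hc.2.trans_le (hb'v.trans hv'.2.le)) (lt_irrefl c)
  · rcases hkd with ⟨h1, h2⟩ | ⟨h1, h2⟩
    · exact Or.inl ⟨h1, by omega⟩
    · exact Or.inr ⟨h1, by omega⟩

lemma descent [Finite E] (hheap : IsFCHeap (fun s t => CoxeterMatrix.Aₙ n s t) ε) :
    ∀ k : ℕ, ∀ (s : Fin n) (a b : E), MinBalanced ε a b →
      CoxeterMatrix.Aₙ n s (ε a) ≠ 2 → s ≠ ε a →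
      (∀ c ∈ Set.Ioo a b, ε c ≠ s) →
      (if (s : ℕ) < (ε a : ℕ) then n - 1 - (ε a : ℕ) else (ε a : ℕ)) ≤ k → False := by
  intro k
  induction k with
  | zero =>
    intro s a b hmb hadj hne hforb hk
    obtain ⟨a', b', hmb', hadj', hne', hforb', hkd⟩ := descent_step hheap hmb hadj hne hforb
    have hb := (ε a').isLt
    rcases hkd with ⟨h1, h2⟩ | ⟨h1, h2⟩
    · rw [if_pos (by omega)] at hk; omega
    · rw [if_neg (by omega)] at hk; omega
  | succ k ih =>
    intro s a b hmb hadj hne hforb hk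
    obtain ⟨a', b', hmb', hadj', hne', hforb', hkd⟩ := descent_step hheap hmb hadj hne hforb
    apply ih (ε a) a' b' hmb' hadj' hne' hforb'
    have hb := (ε a').isLt
    rcases hkd with ⟨h1, h2⟩ | ⟨h1, h2⟩
    · rw [if_pos (by omega)] at hk ⊢; omega
    · rw [if_neg (by omega)] at hk; rw [if_neg (by omega)]; omega

lemma no_repeat [Finite E] (hheap : IsFCHeap (fun s t => CoxeterMatrix.Aₙ n s t) ε)
    {a b : E} (hmb : MinBalanced ε a b) {x y : E}
    (hx : x ∈ intervalS (fun s t => CoxeterMatrix.Aₙ n s t ≠ 2) ε a b)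
    (hy : y ∈ intervalS (fun s t => CoxeterMatrix.Aₙ n s t ≠ 2) ε a b)
    (hxy : x ≠ y) (hlab : ε x = ε y) : False := by
  obtain ⟨u, v, huv, huS, hvS, hluv⟩ :
      ∃ u v, u < v ∧ u ∈ intervalS (fun s t => CoxeterMatrix.Aₙ n s t ≠ 2) ε a b ∧
        v ∈ intervalS (fun s t => CoxeterMatrix.Aₙ n s t ≠ 2) ε a b ∧ ε u = ε v := by
    have hCc : CoxeterMatrix.Aₙ n (ε x) (ε y) ≠ 2 := by
      rw [An_ne_two_iff]; exact Or.inl hlab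
    rcases hheap.1.1 x y hCc with hle | hle
    · exact ⟨x, y, lt_of_le_of_ne hle hxy, hx, hy, hlab⟩
    · exact ⟨y, x, lt_of_le_of_ne hle (Ne.symm hxy), hy, hx, hlab.symm⟩
  obtain ⟨a', b', hua', hb'v, hεa', hmb'⟩ := exists_consecutive u v huv hluv
  have hu' := S_strict hmb huS
  have hv' := S_strict hmb hvS
  refine descent hheap _ (ε a) a' b' hmb' ?_ ?_ ?_ le_rfl
  · rw [hεa']; exact huS.2.2
  · rw [hεa']; exact Ne.symm huS.2.1
  · intro c hc hlab'
    have hc' : c ∈ Set.Icc a b :=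
      ⟨(hu'.1.trans_le hua').le.trans hc.1.le, (hc.2.le.trans hb'v).trans hv'.2.le⟩
    rcases hmb.2.2 c hc' hlab' with h | h
    · subst h; exact absurd ((hu'.1.trans_le hua').trans hc.1) (lt_irrefl c)
    · subst h; exact absurd (hc.2.trans_le (hb'v.trans hv'.2.le)) (lt_irrefl c)

end HeapLemmas

/-- Remark 3.3.7 (first part): in the heap of a fully commutative element of a
Coxeter group of type Aₙ, the set S_{[a,b]} of any minimal balanced subinterval
[a, b] consists of precisely two elements, and they have distinct labels. -/
theorem intervalS_typeA_two_elements {E : Type*} [PartialOrder E] [Finite E]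
    (n : ℕ) (ε : E → Fin n)
    (hheap : IsFCHeap (fun s t => CoxeterMatrix.Aₙ n s t) ε)
    (a b : E) (hmb : MinBalanced ε a b) :
    ∃ c d : E, c ≠ d ∧ ε c ≠ ε d ∧
      intervalS (fun s t => CoxeterMatrix.Aₙ n s t ≠ 2) ε a b = {c, d} := by
  obtain ⟨c, d, hc, hd, hcd⟩ := exists_two hheap hmb
  have hlab : ε c ≠ ε d := fun h => no_repeat hheap hmb hc hd hcd h
  refine ⟨c, d, hcd, hlab, ?_⟩
  ext e
  simp only [Set.mem_insert_iff, Set.mem_singleton_iff]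
  constructor
  · intro he
    by_contra hcon
    push_neg at hcon
    have h1 : ε e ≠ ε c := fun h => no_repeat hheap hmb he hc hcon.1 h
    have h2 : ε e ≠ ε d := fun h => no_repeat hheap hmb he hd hcon.2 h
    have adjval : ∀ z, z ∈ intervalS (fun s t => CoxeterMatrix.Aₙ n s t ≠ 2) ε a b →
        ((ε z : ℕ) + 1 = (ε a : ℕ) ∨ (ε a : ℕ) + 1 = (ε z : ℕ)) := by
      intro z hz
      rcases (An_ne_two_iff (ε a) (ε z)).mp hz.2.2 with h | h | h
      · exact absurd h.symm hz.2.1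
      · exact Or.inl h
      · exact Or.inr h
    have v1 := adjval e he
    have v2 := adjval c hc
    have v3 := adjval d hd
    have h1' : (ε e : ℕ) ≠ (ε c : ℕ) := fun h => h1 (Fin.ext h)
    have h2' : (ε e : ℕ) ≠ (ε d : ℕ) := fun h => h2 (Fin.ext h)
    omega
  · rintro (rfl | rfl)
    exacts [hc, hd]
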